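/- Let G and H be complex Hilbert spaces with G continuously and densely embedded in H, and let G ⊂ H ⊂ G* be the associated Gelfand triplet. Let S ∈ B(G,G*) and suppose that S − z : G → G* is bijective for some z ∈ ℂ (z acting through the embedding of G into G*). Then the operator Ŝ induced by S in H (with domain D(Ŝ) = {u ∈ G : Su ∈ H} and acting as S) is closed and densely defined, z belongs to its resolvent set (Ŝ − z is a bijection of D(Ŝ) onto H with bounded inverse), the Hilbert-space adjoint of Ŝ equals the operator induced in H by the adjoint form S* ∈ B(G,G*), and the domains D(Ŝ) and D(Ŝ*) are dense subspaces of G. -/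

import Mathlib

open ContinuousLinearMap

noncomputable section

/-- The space of continuous antilinear forms on `G` (the "adjoint space" `G*`). -/
abbrev AntiDual (G : Type*) [NormedAddCommGroup G] [NormedSpace ℂ G] : Type _ :=
  G →SL[starRingEnd ℂ] ℂ

/-- Given a continuous embedding `e : G → H` of a normed space into a Hilbert space,
the canonical map `H → G*`, `v ↦ (u ↦ ⟪e u, v⟫)`. -/
def toAntiDual {G H : Type*} [NormedAddCommGroup G] [NormedSpace ℂ G]
    [NormedAddCommGroup H] [InnerProductSpace ℂ H] (e : G →L[ℂ] H) :
    H →L[ℂ] AntiDual G :=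
  LinearMap.mkContinuous
    { toFun := fun v => ((innerSL ℂ).flip v).comp e
      map_add' := fun v w => by ext u; simp
      map_smul' := fun c v => by ext u; simp }
    ‖e‖ (fun v => by
      have hv : ‖(innerSL ℂ).flip v‖ ≤ ‖v‖ :=
        opNorm_le_bound _ (norm_nonneg v)
          (fun u => by simpa [mul_comm] using norm_inner_le_norm (𝕜 := ℂ) u v)
      calc ‖((innerSL ℂ).flip v).comp e‖ ≤ ‖(innerSL ℂ).flip v‖ * ‖e‖ := opNorm_comp_le _ _
      _ ≤ ‖v‖ * ‖e‖ := by gcongr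
      _ = ‖e‖ * ‖v‖ := mul_comm _ _)

/-- Precomposition with `D : G →L E`, as a map `E* →L G*`; this is the adjoint `D*`. -/
def precompAntiDual {G E : Type*} [NormedAddCommGroup G] [NormedSpace ℂ G]
    [NormedAddCommGroup E] [NormedSpace ℂ E] (D : G →L[ℂ] E) :
    AntiDual E →L[ℂ] AntiDual G :=
  LinearMap.mkContinuous
    { toFun := fun w => w.comp D
      map_add' := fun w₁ w₂ => by ext u; simp
      map_smul' := fun c w => by ext u; simp }
    ‖D‖ (fun w => by
      calc ‖w.comp D‖ ≤ ‖w‖ * ‖D‖ := opNorm_comp_le _ _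
      _ = ‖D‖ * ‖w‖ := mul_comm _ _)

/-- Auxiliary: the antilinear form `u ↦ conj ⟨v, a u⟩`. -/
def adjointFormAux {E : Type*} [NormedAddCommGroup E] [NormedSpace ℂ E]
    (a : E →L[ℂ] AntiDual E) (v : E) : AntiDual E :=
  LinearMap.mkContinuous
    { toFun := fun u => starRingEnd ℂ (a u v)
      map_add' := fun u₁ u₂ => by simp
      map_smul' := fun c u => by simp }
    (‖a‖ * ‖v‖) (fun u => by
      simp only [LinearMap.coe_mk, AddHom.coe_mk]
      calc ‖starRingEnd ℂ (a u v)‖ = ‖a u v‖ := by simp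
      _ ≤ ‖a u‖ * ‖v‖ := (a u).le_opNorm v
      _ ≤ (‖a‖ * ‖u‖) * ‖v‖ := by gcongr; exact a.le_opNorm u
      _ = ‖a‖ * ‖v‖ * ‖u‖ := by ring)

theorem adjointFormAux_norm_le {E : Type*} [NormedAddCommGroup E] [NormedSpace ℂ E]
    (a : E →L[ℂ] AntiDual E) (v : E) : ‖adjointFormAux a v‖ ≤ ‖a‖ * ‖v‖ :=
  LinearMap.mkContinuous_norm_le _ (mul_nonneg (norm_nonneg a) (norm_nonneg v)) _

@[simp] theorem adjointFormAux_apply {E : Type*} [NormedAddCommGroup E] [NormedSpace ℂ E]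
    (a : E →L[ℂ] AntiDual E) (v u : E) :
    adjointFormAux a v u = starRingEnd ℂ (a u v) := rfl

/-- The adjoint form `a* ∈ B(E,E*)` of `a ∈ B(E,E*)`: `⟨u, a* v⟩ = conj ⟨v, a u⟩`. -/
def adjointForm {E : Type*} [NormedAddCommGroup E] [NormedSpace ℂ E]
    (a : E →L[ℂ] AntiDual E) : E →L[ℂ] AntiDual E :=
  LinearMap.mkContinuous
    { toFun := fun v => adjointFormAux a v
      map_add' := fun v w => by ext u; simp
      map_smul' := fun c v => by ext u; simp }
    ‖a‖ (fun v => adjointFormAux_norm_le a v)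

section Aux

open scoped ComplexConjugate

variable {G H : Type*} [NormedAddCommGroup G] [InnerProductSpace ℂ G]
  [NormedAddCommGroup H] [InnerProductSpace ℂ H]

local notation "⟪" x ", " y "⟫" => @inner ℂ _ _ x y

theorem toAntiDual_apply' (e : G →L[ℂ] H) (v : H) (u : G) :
    toAntiDual e v u = ⟪e u, v⟫ := rfl

theorem adjointForm_apply' (a : G →L[ℂ] AntiDual G) (v u : G) :
    adjointForm a v u = conj (a u v) := rfl

/-- If `e` has dense range, then `toAntiDual e` is injective. -/
theorem toAntiDual_inj (e : G →L[ℂ] H) (hd : DenseRange ⇑e) :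
    Function.Injective ⇑(toAntiDual e) := by
  intro v w hvw
  apply ext_inner_left ℂ
  intro x
  have hx : x ∈ closure (Set.range ⇑e) := hd x
  have hcl : IsClosed {x : H | ⟪x, v⟫ = ⟪x, w⟫} :=
    isClosed_eq (continuous_id.inner continuous_const) (continuous_id.inner continuous_const)
  have hsub : Set.range ⇑e ⊆ {x : H | ⟪x, v⟫ = ⟪x, w⟫} := by
    rintro _ ⟨u, rfl⟩
    have h1 : toAntiDual e v u = toAntiDual e w u := by rw [hvw]
    simpa [toAntiDual_apply'] using h1
  exact closure_minimal hsub hcl hx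

/-- If a set's preimage under a densely-ranged continuous map is dense, the set is dense. -/
theorem dense_of_dense_preimage (e : G →L[ℂ] H) (hd : DenseRange ⇑e) {s : Set H}
    (hs : Dense (⇑e ⁻¹' s)) : Dense s := by
  have h1 : Set.range ⇑e ⊆ closure s := by
    rintro _ ⟨g, rfl⟩
    have : e g ∈ closure (⇑e '' (⇑e ⁻¹' s)) :=
      image_closure_subset_closure_image e.continuous (Set.mem_image_of_mem _ (hs g))
    exact closure_mono (Set.image_preimage_subset _ _) this
  intro x
  exact closure_minimal h1 isClosed_closure (hd x)

variable [CompleteSpace G]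

/-- Riesz representation for the antidual of a Hilbert space. -/
theorem antiDual_riesz (ψ : AntiDual G) : ∃ g : G, ∀ u : G, ψ u = ⟪u, g⟫ := by
  let ζ : G →L[ℂ] ℂ := LinearMap.mkContinuous
    { toFun := fun u => conj (ψ u)
      map_add' := fun u₁ u₂ => by simp
      map_smul' := fun c u => by simp }
    ‖ψ‖ (fun u => by simpa using ψ.le_opNorm u)
  obtain ⟨g, hg⟩ := (InnerProductSpace.toDual ℂ G).surjective ζ
  refine ⟨g, fun u => ?_⟩
  have h1 : ⟪g, u⟫ = ζ u := by rw [← InnerProductSpace.toDual_apply_apply, hg]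
  have h2 : ζ u = conj (ψ u) := rfl
  calc ψ u = conj (conj (ψ u)) := by simp
  _ = conj ⟪g, u⟫ := by rw [h1, h2]
  _ = ⟪u, g⟫ := inner_conj_symm _ _

/-- The Riesz map `G →L AntiDual G`, `g ↦ ⟪·, g⟫`. -/
theorem bijective_toAntiDual_id :
    Function.Bijective ⇑(toAntiDual (ContinuousLinearMap.id ℂ G)) := by
  constructor
  · exact toAntiDual_inj _ denseRange_id
  · intro ψ
    obtain ⟨g, hg⟩ := antiDual_riesz ψ
    exact ⟨g, by ext u; exact (hg u).symm⟩

/-- The adjoint form of a bijective form is bijective. -/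
theorem adjointForm_bijective {a : G →L[ℂ] AntiDual G} (ha : Function.Bijective ⇑a) :
    Function.Bijective ⇑(adjointForm a) := by
  have hι := bijective_toAntiDual_id (G := G)
  set ι : G →L[ℂ] AntiDual G := toAntiDual (ContinuousLinearMap.id ℂ G) with hιdef
  have hιapp : ∀ g u : G, ι g u = ⟪u, g⟫ := fun g u => rfl
  let aeq : G ≃L[ℂ] AntiDual G := ContinuousLinearEquiv.ofBijective a
    (LinearMap.ker_eq_bot.mpr ha.1) (LinearMap.range_eq_top.mpr ha.2)
  have haeq : ∀ u : G, aeq u = a u := fun u => rfl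
  constructor
  · intro v w hvw
    have h1 : ∀ u : G, a u v = a u w := by
      intro u
      have h2 : adjointForm a v u = adjointForm a w u := by rw [hvw]
      rw [adjointForm_apply', adjointForm_apply'] at h2
      exact star_injective h2
    have h3 : ι (v - w) v = ι (v - w) w := by
      obtain ⟨u, hu⟩ := ha.2 (ι (v - w))
      rw [← hu]; exact h1 u
    have h4 : ⟪v - w, v - w⟫ = 0 := by
      have := h3
      rw [hιapp, hιapp] at this
      rw [inner_sub_left, this, sub_self]
    have := inner_self_eq_zero.mp h4
    exact sub_eq_zero.mp this
  · intro ψ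
    let L : AntiDual G →L[ℂ] ℂ := LinearMap.mkContinuous
      { toFun := fun φ => conj (ψ (aeq.symm φ))
        map_add' := fun φ₁ φ₂ => by simp
        map_smul' := fun c φ => by simp }
      (‖ψ‖ * ‖(aeq.symm : AntiDual G →L[ℂ] G)‖) (fun φ => by
        simp only [LinearMap.coe_mk, AddHom.coe_mk]
        calc ‖conj (ψ (aeq.symm φ))‖ = ‖ψ (aeq.symm φ)‖ := by simp
        _ ≤ ‖ψ‖ * ‖aeq.symm φ‖ := ψ.le_opNorm _
        _ ≤ ‖ψ‖ * (‖(aeq.symm : AntiDual G →L[ℂ] G)‖ * ‖φ‖) := by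
            gcongr; exact (aeq.symm : AntiDual G →L[ℂ] G).le_opNorm φ
        _ = ‖ψ‖ * ‖(aeq.symm : AntiDual G →L[ℂ] G)‖ * ‖φ‖ := by ring)
    obtain ⟨v, hv⟩ := (InnerProductSpace.toDual ℂ G).surjective (L.comp ι)
    refine ⟨v, ?_⟩
    ext u
    have h5 : ∀ x : G, ⟪v, x⟫ = L (ι x) := fun x => by
      rw [← InnerProductSpace.toDual_apply_apply, hv]; rfl
    have h6 : a u v = conj (ψ u) := by
      obtain ⟨g, hg⟩ := hι.2 (a u)
      have h7 : a u v = ⟪v, g⟫ := by rw [← hg]; exact (hιapp g v).symm.symm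
      have h8 : L (ι g) = conj (ψ (aeq.symm (a u))) := by rw [hg]; rfl
      have h9 : aeq.symm (a u) = u := by rw [← haeq]; exact aeq.symm_apply_apply u
      rw [h7, h5 g, h8, h9]
    rw [adjointForm_apply', h6]
    simp

end Aux
section Aux2

open scoped ComplexConjugate

variable {G H : Type*} [NormedAddCommGroup G] [InnerProductSpace ℂ G]
  [NormedAddCommGroup H] [InnerProductSpace ℂ H] [CompleteSpace G] [CompleteSpace H]

local notation "⟪" x ", " y "⟫" => @inner ℂ _ _ x y

/-- If `e` is injective, then `toAntiDual e` has dense range. -/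
theorem dense_range_toAntiDual (e : G →L[ℂ] H) (he : Function.Injective ⇑e) :
    Dense (Set.range ⇑(toAntiDual e)) := by
  set ad : H →L[ℂ] G := ContinuousLinearMap.adjoint e with had
  have hval : ∀ v : H, toAntiDual e v = toAntiDual (ContinuousLinearMap.id ℂ G) (ad v) := by
    intro v; ext u
    rw [toAntiDual_apply', toAntiDual_apply']
    show (⟪e u, v⟫ : ℂ) = ⟪u, ad v⟫
    rw [had, ContinuousLinearMap.adjoint_inner_right]
  have h1 : (LinearMap.range (ad : H →ₗ[ℂ] G))ᗮ = ⊥ := by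
    rw [Submodule.eq_bot_iff]
    intro w hw
    have h2 : ∀ v : H, (⟪(ad v : G), w⟫ : ℂ) = 0 := fun v =>
      hw (ad v) (LinearMap.mem_range.mpr ⟨v, rfl⟩)
    have h3 : ∀ v : H, (⟪v, e w⟫ : ℂ) = 0 := by
      intro v
      have := h2 v
      rwa [had, ContinuousLinearMap.adjoint_inner_left] at this
    have h4 : e w = 0 := by
      have := h3 (e w)
      simpa [inner_self_eq_zero] using this
    apply he
    simpa using h4
  have h4 : Dense (Set.range ⇑ad) := by
    have h5 := Submodule.topologicalClosure_eq_top_iff.mpr h1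
    have h6 := Submodule.dense_iff_topologicalClosure_eq_top.mpr h5
    exact h6
  have hι := bijective_toAntiDual_id (G := G)
  let ιeq : G ≃L[ℂ] AntiDual G := ContinuousLinearEquiv.ofBijective
    (toAntiDual (ContinuousLinearMap.id ℂ G))
    (LinearMap.ker_eq_bot.mpr hι.1) (LinearMap.range_eq_top.mpr hι.2)
  have hιeq : ∀ g : G, ιeq g = toAntiDual (ContinuousLinearMap.id ℂ G) g := fun g => rfl
  have key : Set.range ⇑(toAntiDual e) = ⇑(ιeq.symm) ⁻¹' (Set.range ⇑ad) := by
    ext φ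
    simp only [Set.mem_range, Set.mem_preimage]
    constructor
    · rintro ⟨v, rfl⟩
      refine ⟨v, ?_⟩
      rw [hval v, ← hιeq]
      exact (ιeq.symm_apply_apply (ad v)).symm
    · rintro ⟨v, hv⟩
      refine ⟨v, ?_⟩
      rw [hval v, ← hιeq, hv]
      exact ιeq.apply_symm_apply φ
  rw [key]
  exact h4.preimage ιeq.symm.toHomeomorph.isOpenMap

end Aux2
open scoped ComplexConjugate

local notation "⟪" x ", " y "⟫" => @inner ℂ _ _ x y

/-- For a Gelfand triplet `G ⊂ H ⊂ G*` and `S ∈ B(G,G*)` with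
`S − z : G → G*` bijective, the operator `Ŝ` induced by `S` in `H` is closed and densely
defined, `z` is in its resolvent set, its Hilbert-space adjoint is the operator induced by
the adjoint form `S*`, and the domains of `Ŝ` and `Ŝ*` are dense subspaces of `G`. -/
theorem stmt19 {G H : Type*} [NormedAddCommGroup G] [InnerProductSpace ℂ G] [CompleteSpace G]
    [NormedAddCommGroup H] [InnerProductSpace ℂ H] [CompleteSpace H]
    (e : G →L[ℂ] H) (he : Function.Injective ⇑e) (hd : DenseRange ⇑e)
    (S : G →L[ℂ] AntiDual G) (z : ℂ)
    (hbij : Function.Bijective ⇑(S - z • (toAntiDual e).comp e))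
    -- `T` is the operator `Ŝ` induced by `S` in `H`:
    (T : H →ₗ.[ℂ] H)
    (hTdom : ∀ v : H, v ∈ T.domain ↔ ∃ u : G, e u = v ∧ ∃ w : H, S u = toAntiDual e w)
    (hTact : ∀ (x : T.domain) (u : G), e u = (x : H) → S u = toAntiDual e (T x))
    -- `T'` is the operator induced by the adjoint form `S*` in `H`:
    (T' : H →ₗ.[ℂ] H)
    (hT'dom : ∀ v : H, v ∈ T'.domain ↔
      ∃ u : G, e u = v ∧ ∃ w : H, adjointForm S u = toAntiDual e w)
    (hT'act : ∀ (x : T'.domain) (u : G), e u = (x : H) →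
      adjointForm S u = toAntiDual e (T' x)) :
    T.IsClosed ∧
    Dense (T.domain : Set H) ∧
    (∃ R : H →L[ℂ] H,
      (∀ v : H, ∃ h : R v ∈ T.domain, T ⟨R v, h⟩ - z • R v = v) ∧
      (∀ x : T.domain, R (T x - z • (x : H)) = (x : H))) ∧
    T.adjoint = T' ∧
    Dense {u : G | e u ∈ T.domain} ∧
    Dense {u : G | e u ∈ T.adjoint.domain} := by
  have hinj := toAntiDual_inj e hd
  set A : G →L[ℂ] AntiDual G := S - z • (toAntiDual e).comp e with hAdef
  have hbijA : Function.Bijective ⇑A := hbij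
  let Aeq : G ≃L[ℂ] AntiDual G := ContinuousLinearEquiv.ofBijective A
    (LinearMap.ker_eq_bot.mpr hbijA.1) (LinearMap.range_eq_top.mpr hbijA.2)
  have hAeq : ∀ u : G, Aeq u = A u := fun u => rfl
  have hAapp : ∀ u : G, A u = S u - z • toAntiDual e (e u) := by
    intro u
    rw [hAdef]
    rfl
  have hSapp : ∀ u : G, S u = A u + z • toAntiDual e (e u) := by
    intro u
    rw [hAapp]
    abel
  set R : H →L[ℂ] H := (e.comp (Aeq.symm : AntiDual G →L[ℂ] G)).comp (toAntiDual e) with hRdef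
  have hRapp : ∀ v : H, R v = e (Aeq.symm (toAntiDual e v)) := fun v => rfl
  -- forward resolvent property
  have hfwd : ∀ v : H, ∃ h : R v ∈ T.domain, T ⟨R v, h⟩ = v + z • R v := by
    intro v
    set u : G := Aeq.symm (toAntiDual e v) with hu
    have hAu : A u = toAntiDual e v := by rw [← hAeq]; exact Aeq.apply_symm_apply _
    have hSu : S u = toAntiDual e (v + z • e u) := by
      rw [hSapp, hAu, map_add, map_smul]
    have hRv : R v = e u := rfl
    have hmem : R v ∈ T.domain := (hTdom (R v)).mpr ⟨u, hRv.symm, v + z • e u, hSu⟩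
    refine ⟨hmem, ?_⟩
    have hval := hTact ⟨R v, hmem⟩ u hRv.symm
    have h2 := hinj (hval.symm.trans hSu)
    rw [h2, hRv]
  -- backward resolvent property
  have hback : ∀ x : T.domain, R (T x - z • (x : H)) = (x : H) := by
    intro x
    obtain ⟨u, hu, w, hw⟩ := (hTdom x).mp x.2
    have hval := hTact x u hu
    have hAu : A u = toAntiDual e (T x - z • (x : H)) := by
      rw [hAapp, hval, hu, map_sub, map_smul]
    have h2 : Aeq.symm (toAntiDual e (T x - z • (x : H))) = u := by
      rw [← hAu, ← hAeq]
      exact Aeq.symm_apply_apply u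
    rw [hRapp, h2, hu]
  -- closedness
  have hclosed : T.IsClosed := by
    show IsClosed (T.graph : Set (H × H))
    have hgraph : (T.graph : Set (H × H)) = {p : H × H | R (p.2 - z • p.1) = p.1} := by
      ext p
      rw [SetLike.mem_coe, LinearPMap.mem_graph_iff]
      constructor
      · rintro ⟨x, hx1, hx2⟩
        show R (p.2 - z • p.1) = p.1
        rw [← hx1, ← hx2]
        exact hback x
      · intro hp
        obtain ⟨h, hTv⟩ := hfwd (p.2 - z • p.1)
        refine ⟨⟨R (p.2 - z • p.1), h⟩, hp, ?_⟩
        rw [hTv, hp]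
        abel
    rw [hgraph]
    have h3 : {p : H × H | R (p.2 - z • p.1) = p.1}
        = (fun p : H × H => R (p.2 - z • p.1) - p.1) ⁻¹' {0} := by
      ext p
      simp [sub_eq_zero]
    rw [h3]
    exact isClosed_singleton.preimage (by fun_prop)
  -- density of the domain inside `G`
  have hshiftS : ∀ u : G, (∃ w : H, S u = toAntiDual e w) ↔ ∃ w : H, A u = toAntiDual e w := by
    intro u
    constructor
    · rintro ⟨w, hw⟩
      exact ⟨w - z • e u, by rw [hAapp, hw, map_sub, map_smul]⟩
    · rintro ⟨w, hw⟩
      exact ⟨w + z • e u, by rw [hSapp, hw, map_add, map_smul]⟩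
  have hdomset : {u : G | e u ∈ T.domain} = ⇑Aeq ⁻¹' (Set.range ⇑(toAntiDual e)) := by
    ext u
    simp only [Set.mem_setOf_eq, Set.mem_preimage, Set.mem_range, hTdom]
    constructor
    · rintro ⟨u', hu', w, hw⟩
      have huu : u' = u := he hu'
      rw [huu] at hw
      obtain ⟨w', hw'⟩ := (hshiftS u).mp ⟨w, hw⟩
      exact ⟨w', by rw [hAeq, hw']⟩
    · rintro ⟨w, hw⟩
      rw [hAeq] at hw
      obtain ⟨w', hw'⟩ := (hshiftS u).mpr ⟨w, hw.symm⟩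
      exact ⟨u, rfl, w', hw'⟩
  have hDdense : Dense {u : G | e u ∈ T.domain} := by
    rw [hdomset]
    exact (dense_range_toAntiDual e he).preimage Aeq.toHomeomorph.isOpenMap
  have hTdense : Dense (T.domain : Set H) := dense_of_dense_preimage e hd hDdense
  -- the adjoint form of `A`
  have hAstar : ∀ v : G,
      adjointForm A v = adjointForm S v - (conj z : ℂ) • toAntiDual e (e v) := by
    intro v
    ext u
    rw [ContinuousLinearMap.sub_apply, ContinuousLinearMap.smul_apply,
      adjointForm_apply', adjointForm_apply', hAapp,
      ContinuousLinearMap.sub_apply, ContinuousLinearMap.smul_apply]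
    rw [map_sub, smul_eq_mul, smul_eq_mul, map_mul]
    congr 1
    congr 1
    rw [toAntiDual_apply', toAntiDual_apply', inner_conj_symm]
  have hshiftS' : ∀ u : G,
      (∃ w : H, adjointForm S u = toAntiDual e w) ↔
        ∃ w : H, adjointForm A u = toAntiDual e w := by
    intro u
    constructor
    · rintro ⟨w, hw⟩
      exact ⟨w - (conj z : ℂ) • e u, by rw [hAstar, hw, map_sub, map_smul]⟩
    · rintro ⟨w, hw⟩
      refine ⟨w + (conj z : ℂ) • e u, ?_⟩
      have h4 : adjointForm S u = adjointForm A u + (conj z : ℂ) • toAntiDual e (e u) := by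
        rw [hAstar]; abel
      rw [h4, hw, map_add, map_smul]
  have hbijAstar : Function.Bijective ⇑(adjointForm A) := adjointForm_bijective hbijA
  let Astareq : G ≃L[ℂ] AntiDual G := ContinuousLinearEquiv.ofBijective (adjointForm A)
    (LinearMap.ker_eq_bot.mpr hbijAstar.1) (LinearMap.range_eq_top.mpr hbijAstar.2)
  have hAstareq : ∀ u : G, Astareq u = adjointForm A u := fun u => rfl
  -- `T'` is a formal adjoint of `T`
  have hformal : T.IsFormalAdjoint T' := by
    intro x y
    obtain ⟨u, hu, _, _⟩ := (hTdom x).mp x.2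
    obtain ⟨v, hv, _, _⟩ := (hT'dom y).mp y.2
    have hx := hTact x u hu
    have hy := hT'act y v hv
    rw [← hu, ← hv]
    have c1 : (⟪e u, T' y⟫ : ℂ) = adjointForm S v u := by
      rw [hy]; rfl
    rw [c1, adjointForm_apply', hx]
    rw [toAntiDual_apply', inner_conj_symm]
  have h1 : T' ≤ T.adjoint := LinearPMap.IsFormalAdjoint.le_adjoint hTdense hformal
  have hfa := LinearPMap.adjoint_isFormalAdjoint hTdense (T := T)
  have hsub : ∀ yd : H, yd ∈ T.adjoint.domain → yd ∈ T'.domain := by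
    intro yd hyd
    set ys : H := T.adjoint ⟨yd, hyd⟩ with hys
    set w' : H := ys - (conj z : ℂ) • yd with hw'
    set v : G := Astareq.symm (toAntiDual e w') with hv
    have hAstarv : adjointForm A v = toAntiDual e w' := by
      rw [hv, ← hAstareq]
      exact Astareq.apply_symm_apply _
    have hev : e v = yd := by
      apply ext_inner_left ℂ
      intro w
      obtain ⟨hmem, hTval⟩ := hfwd w
      set u : G := Aeq.symm (toAntiDual e w) with hu
      have hAu : A u = toAntiDual e w := by rw [← hAeq]; exact Aeq.apply_symm_apply _
      have hRw : R w = e u := rfl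
      have c1 : (⟪w, e v⟫ : ℂ) = conj (A u v) := by
        rw [hAu, toAntiDual_apply', inner_conj_symm]
      have c2 : conj (A u v) = (toAntiDual e w') u := by rw [← hAstarv]; rfl
      have c3 : (toAntiDual e w') u = ⟪e u, ys⟫ - conj z * ⟪e u, yd⟫ := by
        rw [toAntiDual_apply', hw', inner_sub_right, inner_smul_right]
      have c4 : (⟪e u, ys⟫ : ℂ) = ⟪T ⟨R w, hmem⟩, yd⟫ := by
        have h5 := hfa ⟨yd, hyd⟩ ⟨R w, hmem⟩
        have h6 : (⟪ys, e u⟫ : ℂ) = ⟪yd, T ⟨R w, hmem⟩⟫ := by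
          rw [hys, ← hRw] at *
          exact h5
        calc (⟪e u, ys⟫ : ℂ) = conj ⟪ys, e u⟫ := (inner_conj_symm _ _).symm
        _ = conj ⟪yd, T ⟨R w, hmem⟩⟫ := by rw [h6]
        _ = ⟪T ⟨R w, hmem⟩, yd⟫ := inner_conj_symm _ _
      have c5 : (⟪T ⟨R w, hmem⟩, yd⟫ : ℂ) - conj z * ⟪e u, yd⟫ = ⟪w, yd⟫ := by
        rw [hTval, hRw, inner_add_left, inner_smul_left]
        ring
      rw [c1, c2, c3, c4, c5]
    have hSstar : adjointForm S v = toAntiDual e ys := by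
      have h7 := hAstar v
      rw [hAstarv, hev] at h7
      have h8 : adjointForm S v = toAntiDual e w' + (conj z : ℂ) • toAntiDual e yd :=
        sub_eq_iff_eq_add.mp h7.symm
      rw [h8, hw', map_sub, map_smul]
      abel
    exact (hT'dom yd).mpr ⟨v, hev, ys, hSstar⟩
  have hdomeq : T'.domain = T.adjoint.domain := le_antisymm h1.1 hsub
  have hadj : T.adjoint = T' := (LinearPMap.eq_of_le_of_domain_eq h1 hdomeq).symm
  -- density of the adjoint's domain inside `G`
  have hD'dense : Dense {u : G | e u ∈ T.adjoint.domain} := by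
    rw [hadj]
    have hdomset' : {u : G | e u ∈ T'.domain} = ⇑Astareq ⁻¹' (Set.range ⇑(toAntiDual e)) := by
      ext u
      simp only [Set.mem_setOf_eq, Set.mem_preimage, Set.mem_range, hT'dom]
      constructor
      · rintro ⟨u', hu', w, hw⟩
        have huu : u' = u := he hu'
        rw [huu] at hw
        obtain ⟨w', hw'⟩ := (hshiftS' u).mp ⟨w, hw⟩
        exact ⟨w', by rw [hAstareq, hw']⟩
      · rintro ⟨w, hw⟩
        rw [hAstareq] at hw
        obtain ⟨w', hw'⟩ := (hshiftS' u).mpr ⟨w, hw.symm⟩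
        exact ⟨u, rfl, w', hw'⟩
    rw [hdomset']
    exact (dense_range_toAntiDual e he).preimage Astareq.toHomeomorph.isOpenMap
  refine ⟨hclosed, hTdense, ⟨R, ?_, hback⟩, hadj, hDdense, hD'dense⟩
  intro v
  obtain ⟨h, hval⟩ := hfwd v
  exact ⟨h, by rw [hval]; exact add_sub_cancel_right _ _⟩

end
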